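/- Set R=N/4. The Fourier coefficients β(λ) of f ↦ ˜Λ_R(f+1)˜H_R(f) are real and non-negative for every λ ∈ F₂(x)/F₂[x], and β(0) ≫ 1 (bounded below by an absolute positive constant, uniformly in N). -/

import Mathlib

open Polynomial
open scoped Classical

noncomputable section

abbrev F2 := ZMod 2
abbrev Kinf := LaurentSeries F2
def polyToK (f : F2[X]) : Kinf :=
  ∑ i ∈ f.support, HahnSeries.single (-(i : ℤ)) (f.coeff i)
def ordK (a : Kinf) : WithBot ℤ := if a = 0 then ⊥ else (↑(-a.order) : WithBot ℤ)
def eKr (a : Kinf) : ℝ := (-1 : ℝ) ^ ((a.coeff 1).val)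
def eK (a : Kinf) : ℂ := ((eKr a : ℝ) : ℂ)
def InT (θ : Kinf) : Prop := ordK θ ≤ ((-1 : ℤ) : WithBot ℤ)
def GN (N : ℕ) : Finset F2[X] :=
  Set.Finite.toFinset (s := {f : F2[X] | f.degree < (N : ℕ)}) (by
    have h : {f : F2[X] | f.degree < (N : ℕ)} = ↑(Polynomial.degreeLT F2 N) := by
      ext f
      simp [Polynomial.mem_degreeLT]
    rw [h]
    have : Finite (Polynomial.degreeLT F2 N) :=
      Finite.of_equiv _ (Polynomial.degreeLTEquiv F2 N).symm.toEquiv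
    exact (Polynomial.degreeLT F2 N : Set F2[X]).toFinite)
def ratK (u s : F2[X]) : Kinf := polyToK u * (polyToK s)⁻¹

/-- τ(f): the number of divisors of `f`. -/
def tau (f : F2[X]) : ℕ := ((GN (f.natDegree + 1)).filter (fun g => g ∣ f)).card

/-- φ(f): the number of invertible residues modulo `f`. -/
def phi (f : F2[X]) : ℕ := ((GN f.natDegree).filter (fun g => IsCoprime g f)).card

/-- ω(f): the number of (irreducible nonconstant, i.e. prime) divisors of `f`. -/
def omegaP (f : F2[X]) : ℕ :=
  ((GN (f.natDegree + 1)).filter (fun r => Irreducible r ∧ r ∣ f)).card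

/-- The Möbius function on `F₂[x]`. -/
def mu (f : F2[X]) : ℤ := if Squarefree f then (-1) ^ (omegaP f) else 0

/-- The set of invertible residues modulo `s` (canonical representatives of
`(F₂[x]/(s))^×`, i.e. polynomials of degree `< deg s` coprime to `s`). -/
def residues (s : F2[X]) : Finset F2[X] := (GN s.natDegree).filter (fun t => IsCoprime t s)

/-- `α(s) = μ(s)/φ(s)`. -/
def alphaA (s : F2[X]) : ℝ := (mu s : ℝ) / (phi s : ℝ)

/-- `α'(s) = ∏_{r | s prime} 3/(2^{deg r}+3)` for `s` squarefree, `0` otherwise. -/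
def alphaB (s : F2[X]) : ℝ :=
  if Squarefree s then
    ∏ r ∈ (GN (s.natDegree + 1)).filter (fun r => Irreducible r ∧ r ∣ s),
      (3 : ℝ) / ((2 : ℝ) ^ r.natDegree + 3)
  else 0

/-- `Λ_M(f) = Σ_{s ∈ G_M} α(s) Σ_{t ∈ (F₂[x]/(s))^×} e(f t s⁻¹)`. -/
def LambdaM (M : ℕ) (f : F2[X]) : ℝ :=
  ∑ s ∈ GN M, alphaA s * ∑ t ∈ residues s, eKr (polyToK f * ratK t s)

/-- `H_M(f) = Σ_{s ∈ G_M} α'(s) Σ_{t ∈ (F₂[x]/(s))^×} e(f t s⁻¹)`. -/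
def HM (M : ℕ) (f : F2[X]) : ℝ :=
  ∑ s ∈ GN M, alphaB s * ∑ t ∈ residues s, eKr (polyToK f * ratK t s)

/-- `Λ'(f) = deg f` if `f` is prime, `0` otherwise. -/
def LambdaP (f : F2[X]) : ℝ := if Irreducible f then (f.natDegree : ℝ) else 0

/-- `Ψ(f) = Λ'(f+1) H_Q(f) 1_{f ∈ G_N}`. -/
def Psi (N Q : ℕ) (f : F2[X]) : ℝ :=
  LambdaP (f + 1) * HM Q f * (if f ∈ GN N then 1 else 0)

/-- `Ψ'(f) = Λ_R(f+1) H_Q(f) 1_{f ∈ G_N}`. -/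
def Psi' (N R Q : ℕ) (f : F2[X]) : ℝ :=
  LambdaM R (f + 1) * HM Q f * (if f ∈ GN N then 1 else 0)

/-- `Λ_r(f)` for a single prime `r`. -/
def Lambda_r (r f : F2[X]) : ℝ :=
  if r ∣ f then 0 else (2 : ℝ) ^ r.natDegree / ((2 : ℝ) ^ r.natDegree - 1)

/-- `τ²_r(f)` for a single prime `r`. -/
def tauSq_r (r f : F2[X]) : ℝ :=
  if r ∣ f then 4 * (2 : ℝ) ^ r.natDegree / ((2 : ℝ) ^ r.natDegree + 3)
  else (2 : ℝ) ^ r.natDegree / ((2 : ℝ) ^ r.natDegree + 3)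

/-- `˜Λ_M(f) = ∏_{r ∈ G_M prime} Λ_r(f)`. -/
def LambdaTilde (M : ℕ) (f : F2[X]) : ℝ :=
  ∏ r ∈ (GN M).filter (fun r => Irreducible r), Lambda_r r f

/-- `˜H_M(f) = ∏_{r ∈ G_M prime} τ²_r(f)`. -/
def HTilde (M : ℕ) (f : F2[X]) : ℝ :=
  ∏ r ∈ (GN M).filter (fun r => Irreducible r), tauSq_r r f

/-- The element of `K∞` determined by a rational function (with `x ↦ t⁻¹`). -/
def ratToK (l : RatFunc F2) : Kinf := polyToK l.num * (polyToK l.denom)⁻¹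

/-- `c : F₂(x)/F₂[x] → ℝ` (encoded on the canonical representatives
`λ = num/denom` in lowest terms with `deg num < deg denom`) is the system of Fourier
coefficients of `F : F₂[x] → ℝ`, i.e. `F(f) = Σ_λ c(λ) e(λ f)`. -/
def IsFourierCoeffs (F : F2[X] → ℝ) (c : RatFunc F2 → ℝ) : Prop :=
  (Function.support c).Finite ∧
  (∀ l : RatFunc F2, c l ≠ 0 → (l.num).degree < (l.denom).degree) ∧
  ∀ f : F2[X], F f = ∑ᶠ l : RatFunc F2, c l * eKr (ratToK l * polyToK f)

/-- The canonical representative (mod `F₂[x]`) of a rational function. -/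
def fracRat (l : RatFunc F2) : RatFunc F2 :=
  l - algebraMap F2[X] (RatFunc F2) (l.num / l.denom)

/-- `c(n, η)` from the statement of the exponential sum estimate for `Λ'`. -/
def cFun (n : ℕ) (η : Kinf) : ℝ :=
  if ordK η < ((-(n : ℤ) - 1 : ℤ) : WithBot ℤ) then 1
  else if ordK η = ((-(n : ℤ) - 1 : ℤ) : WithBot ℤ) then -1
  else 0

/-- The class `C_B(X)` (with explicit implied constant `Cst`): functions whose Fourier
coefficients are supported on `λ` with squarefree denominator of degree `≤ X` and satisfy
`|c(λ)| ≤ Cst · τ(denom λ)^B / 2^{deg (denom λ)}`. -/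
def InClassC (B X : ℕ) (Cst : ℝ) (F : F2[X] → ℝ) : Prop :=
  ∃ c : RatFunc F2 → ℝ, IsFourierCoeffs F c ∧
    (∀ l : RatFunc F2, c l ≠ 0 → Squarefree l.denom ∧ (l.denom).natDegree ≤ X) ∧
    (∀ l : RatFunc F2, |c l| ≤ Cst * (tau l.denom : ℝ) ^ B / 2 ^ (l.denom).natDegree)

/-- The fractional part `‖θ‖` of `θ ∈ K∞`: keep exactly the coefficients of `x^{-n}`, `n ≥ 1`. -/
def fracK (θ : Kinf) : Kinf :=
  ⟨fun n => if 1 ≤ n then θ.coeff n else 0, by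
    apply θ.isPWO_support'.mono
    intro n hn
    simp only [Function.mem_support, ne_eq] at hn ⊢
    intro h
    apply hn
    split_ifs
    · exact h
    · rfl⟩

-- ===================== auxiliary development =====================

/-- The variable `z = x` viewed in `Kinf` (i.e. `t⁻¹` where `t` is the Laurent variable). -/
def zK : Kinf := HahnSeries.single (-1 : ℤ) (1 : F2)

lemma zK_pow (i : ℕ) : zK ^ i = HahnSeries.single (-(i : ℤ)) (1 : F2) := by
  induction i with
  | zero => simp [HahnSeries.single_zero_one]
  | succ n ih =>
    rw [pow_succ, ih, zK, HahnSeries.single_mul_single]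
    push_cast
    ring_nf

/-- `polyToK` as evaluation. -/
lemma polyToK_eq (f : F2[X]) : polyToK f = Polynomial.eval₂ HahnSeries.C zK f := by
  rw [Polynomial.eval₂_eq_sum, Polynomial.sum_def, polyToK]
  refine Finset.sum_congr rfl fun i _ => ?_
  rw [zK_pow, HahnSeries.C_apply, HahnSeries.single_mul_single, zero_add, mul_one]

def polyHom : F2[X] →+* Kinf := Polynomial.eval₂RingHom HahnSeries.C zK

lemma polyToK_eq' (f : F2[X]) : polyToK f = polyHom f := polyToK_eq f

lemma polyToK_add (f g : F2[X]) : polyToK (f + g) = polyToK f + polyToK g := by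
  simp [polyToK_eq', map_add]

lemma polyToK_mul (f g : F2[X]) : polyToK (f * g) = polyToK f * polyToK g := by
  simp [polyToK_eq', map_mul]

lemma polyToK_one : polyToK 1 = 1 := by simp [polyToK_eq', map_one]

lemma polyToK_zero : polyToK 0 = 0 := by simp [polyToK_eq', map_zero]

lemma polyToK_coeff (f : F2[X]) (k : ℤ) :
    (polyToK f).coeff k = if k ≤ 0 then f.coeff (-k).toNat else 0 := by
  rw [polyToK]
  have hsum : (∑ i ∈ f.support, HahnSeries.single (-(i:ℤ)) (f.coeff i)).coeff k
      = ∑ i ∈ f.support, (HahnSeries.single (-(i:ℤ)) (f.coeff i)).coeff k :=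
    map_sum (HahnSeries.coeff.addMonoidHom k) _ f.support
  rw [hsum]
  split_ifs with hk
  · by_cases hmem : (-k).toNat ∈ f.support
    · rw [Finset.sum_eq_single ((-k).toNat)]
      · rw [HahnSeries.coeff_single, if_pos (by omega)]
      · intro b _ hb
        apply HahnSeries.coeff_single_of_ne
        intro h
        apply hb
        omega
      · intro h; exact absurd hmem h
    · rw [Finset.sum_eq_zero, (Polynomial.notMem_support_iff.mp hmem)]
      intro b hb
      apply HahnSeries.coeff_single_of_ne
      intro h
      apply hmem
      have : b = (-k).toNat := by omega
      rwa [this] at hb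
  · apply Finset.sum_eq_zero
    intro b _
    apply HahnSeries.coeff_single_of_ne
    omega

lemma polyToK_coeff_pos (f : F2[X]) (k : ℤ) (hk : 0 < k) : (polyToK f).coeff k = 0 := by
  rw [polyToK_coeff]; simp [not_le.mpr hk]

lemma polyToK_ne_zero {f : F2[X]} (hf : f ≠ 0) : polyToK f ≠ 0 := by
  intro h
  have := polyToK_coeff f (-(f.natDegree : ℤ))
  rw [h] at this
  simp only [HahnSeries.coeff_zero, neg_le, neg_neg, neg_neg] at this
  rw [if_pos (by omega)] at this
  simp only [Int.toNat_natCast] at this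
  exact Polynomial.leadingCoeff_ne_zero.mpr hf this.symm

lemma polyToK_order {f : F2[X]} (hf : f ≠ 0) : (polyToK f).order = -(f.natDegree : ℤ) := by
  apply le_antisymm
  · apply HahnSeries.order_le_of_coeff_ne_zero (Γ := ℤ)
    rw [polyToK_coeff, if_pos (by omega)]
    simp only [neg_neg, Int.toNat_natCast]
    exact Polynomial.leadingCoeff_ne_zero.mpr hf
  · have h1 := mt HahnSeries.coeff_order_eq_zero.mp (polyToK_ne_zero hf)
    rw [polyToK_coeff] at h1
    by_contra hlt
    push_neg at hlt
    rcases le_or_gt (polyToK f).order 0 with h0 | h0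
    · rw [if_pos h0] at h1
      have h2 : f.natDegree < (-(polyToK f).order).toNat := by omega
      exact h1 (Polynomial.coeff_eq_zero_of_natDegree_lt h2)
    · rw [if_neg (not_le.mpr h0)] at h1
      exact h1 rfl

-- ===== ratToK as a ring hom =====

lemma polyHom_nzd : (nonZeroDivisors F2[X]) ≤ (nonZeroDivisors Kinf).comap polyHom := by
  intro p hp
  simp only [Submonoid.mem_comap]
  rw [mem_nonZeroDivisors_iff_ne_zero] at hp ⊢
  rw [← polyToK_eq']
  exact polyToK_ne_zero hp

def ratHom : RatFunc F2 →+* Kinf := RatFunc.liftRingHom polyHom polyHom_nzd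

lemma ratHom_algebraMap (p : F2[X]) : ratHom (algebraMap F2[X] (RatFunc F2) p) = polyToK p := by
  have := RatFunc.liftRingHom_apply_div polyHom polyHom_nzd p 1
  simp only [map_one, div_one] at this
  rw [polyToK_eq']
  exact this

lemma ratHom_div (p q : F2[X]) :
    ratHom (algebraMap F2[X] (RatFunc F2) p / algebraMap F2[X] (RatFunc F2) q)
      = polyToK p * (polyToK q)⁻¹ := by
  show RatFunc.liftRingHom polyHom polyHom_nzd _ = _
  rw [RatFunc.liftRingHom_apply_div, div_eq_mul_inv, ← polyToK_eq', ← polyToK_eq']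

lemma ratToK_eq (l : RatFunc F2) : ratToK l = ratHom l := by
  conv_rhs => rw [← RatFunc.num_div_denom l]
  rw [ratHom_div]
  rfl

lemma ratHom_inj : Function.Injective ratHom := RingHom.injective _

lemma ratToK_div (p q : F2[X]) :
    ratToK (algebraMap F2[X] (RatFunc F2) p / algebraMap F2[X] (RatFunc F2) q)
      = polyToK p * (polyToK q)⁻¹ := by
  rw [ratToK_eq, ratHom_div]

-- ===== eKr basics =====

lemma zmod2_val_zero : (0 : ZMod 2).val = 0 := rfl
lemma zmod2_val_one : (1 : ZMod 2).val = 1 := rfl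

lemma eKr_of_coeff_zero {a : Kinf} (h : a.coeff 1 = 0) : eKr a = 1 := by
  unfold eKr; rw [h, zmod2_val_zero]; norm_num

lemma eKr_of_coeff_one {a : Kinf} (h : a.coeff 1 = 1) : eKr a = -1 := by
  unfold eKr; rw [h, zmod2_val_one]; norm_num

lemma eKr_vals (a : Kinf) : eKr a = 1 ∨ eKr a = -1 := by
  rcases (by decide : ∀ x : ZMod 2, x = 0 ∨ x = 1) (a.coeff 1) with h | h
  · exact Or.inl (eKr_of_coeff_zero h)
  · exact Or.inr (eKr_of_coeff_one h)

lemma eKr_add (a b : Kinf) : eKr (a + b) = eKr a * eKr b := by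
  unfold eKr
  rw [HahnSeries.coeff_add]
  rcases (by decide : ∀ x : ZMod 2, x = 0 ∨ x = 1) (a.coeff 1) with h | h <;>
    rcases (by decide : ∀ x : ZMod 2, x = 0 ∨ x = 1) (b.coeff 1) with h' | h' <;>
      rw [h, h'] <;>
      norm_num [show ((0:ZMod 2) + 0) = 0 from rfl, show ((0:ZMod 2) + 1) = 1 from rfl,
        show ((1:ZMod 2) + 0) = 1 from rfl, show ((1:ZMod 2) + 1) = 0 by decide, show ZMod.val (2 : ZMod 2) = 0 by decide,
        zmod2_val_zero, zmod2_val_one]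

lemma eKr_poly (f : F2[X]) : eKr (polyToK f) = 1 :=
  eKr_of_coeff_zero (polyToK_coeff_pos f 1 one_pos)

lemma eKr_zero : eKr 0 = 1 := by
  unfold eKr; norm_num

-- ===== GN basics =====

lemma mem_GN {M : ℕ} {f : F2[X]} : f ∈ GN M ↔ f.degree < (M : ℕ) := by
  unfold GN
  rw [Set.Finite.mem_toFinset]
  rfl

lemma GN_zero_mem {M : ℕ} : (0 : F2[X]) ∈ GN M := by
  rw [mem_GN]
  simp [Polynomial.degree_zero]

lemma GN_add_mem {M : ℕ} {f g : F2[X]} (hf : f ∈ GN M) (hg : g ∈ GN M) : f + g ∈ GN M := by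
  rw [mem_GN] at *
  exact lt_of_le_of_lt (Polynomial.degree_add_le f g) (max_lt hf hg)

lemma GN_card (M : ℕ) : (GN M).card = 2 ^ M := by
  have h1 : (GN M).card = {f : F2[X] | f.degree < (M : ℕ)}.ncard :=
    (Set.ncard_eq_toFinset_card _ _).symm
  rw [h1, ← Nat.card_coe_set_eq]
  have h : {f : F2[X] | f.degree < (M:ℕ)} = ↑(Polynomial.degreeLT F2 M) := by
    ext f; simp [Polynomial.mem_degreeLT]
  rw [h]
  show Nat.card (Polynomial.degreeLT F2 M) = 2 ^ M
  rw [Nat.card_congr ((Polynomial.degreeLTEquiv F2 M).toEquiv)]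
  simp [Nat.card_eq_fintype_card]

-- shift bijection

lemma GN_sum_shift {M : ℕ} {g : F2[X]} (hg : g ∈ GN M) (F : F2[X] → ℝ) :
    ∑ f ∈ GN M, F (f + g) = ∑ f ∈ GN M, F f := by
  apply Finset.sum_nbij' (fun f => f + g) (fun f => f + g)
  · intro a ha; exact GN_add_mem ha hg
  · intro a ha; exact GN_add_mem ha hg
  · intro a _
    rw [add_assoc, CharTwo.add_self_eq_zero, add_zero]
  · intro a _
    rw [add_assoc, CharTwo.add_self_eq_zero, add_zero]
  · intro a _; rfl

-- ===== order facts =====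

lemma ratK_order {p q : F2[X]} (hp : p ≠ 0) (hq : q ≠ 0) :
    polyToK p * (polyToK q)⁻¹ ≠ 0 ∧
    (polyToK p * (polyToK q)⁻¹).order = (q.natDegree : ℤ) - p.natDegree := by
  have hq' : polyToK q ≠ 0 := polyToK_ne_zero hq
  have hne : polyToK p * (polyToK q)⁻¹ ≠ 0 := by
    apply mul_ne_zero (polyToK_ne_zero hp)
    exact inv_ne_zero hq'
  refine ⟨hne, ?_⟩
  have key : (polyToK p * (polyToK q)⁻¹) * polyToK q = polyToK p := by
    rw [mul_assoc, inv_mul_cancel₀ hq', mul_one]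
  have := congrArg HahnSeries.order key
  rw [HahnSeries.order_mul hne hq', polyToK_order hp, polyToK_order hq] at this
  omega

lemma polyToK_X_pow (k : ℕ) : polyToK (Polynomial.X ^ k) = HahnSeries.single (-(k:ℤ)) 1 := by
  rw [polyToK_eq', map_pow, ← zK_pow]
  congr 1
  exact Polynomial.eval₂_X _ _

lemma sum_eKr_eq_zero {θ : Kinf} {M : ℕ} {g : F2[X]} (hg : g ∈ GN M)
    (hcoeff : (θ * polyToK g).coeff 1 = 1) :
    ∑ f ∈ GN M, eKr (θ * polyToK f) = 0 := by
  have h := GN_sum_shift hg (fun f => eKr (θ * polyToK f))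
  simp only [polyToK_add, mul_add, eKr_add] at h
  rw [eKr_of_coeff_one hcoeff] at h
  simp only [mul_neg_one, Finset.sum_neg_distrib] at h
  linarith

lemma sum_eKr_eq_zero' {θ : Kinf} {M : ℕ} (hθ : θ ≠ 0) (h1 : 1 ≤ θ.order)
    (h2 : θ.order ≤ (M:ℤ)) :
    ∑ f ∈ GN M, eKr (θ * polyToK f) = 0 := by
  set k : ℕ := (θ.order - 1).toNat with hk
  apply sum_eKr_eq_zero (g := Polynomial.X ^ k)
  · rw [mem_GN, Polynomial.degree_X_pow]
    exact_mod_cast (by omega : k < M)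
  · rw [polyToK_X_pow]
    have h1' : (1:ℤ) = θ.order + (-(k:ℤ)) := by omega
    rw [h1', HahnSeries.coeff_mul_single_add, mul_one]
    have := mt HahnSeries.coeff_order_eq_zero.mp hθ
    exact (by decide : ∀ x : ZMod 2, x ≠ 0 → x = 1) _ this

/-- Orthogonality: character sum over residues mod a nonconstant polynomial `r`. -/
lemma orth_sum {r : F2[X]} (hr0 : r ≠ 0) (hrd : 1 ≤ r.natDegree) (f : F2[X]) :
    ∑ t ∈ GN r.natDegree, eKr (polyToK t * (polyToK r)⁻¹ * polyToK f)
      = if r ∣ f then (2:ℝ) ^ r.natDegree else 0 := by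
  have hrK : polyToK r ≠ 0 := polyToK_ne_zero hr0
  by_cases hdvd : r ∣ f
  · rw [if_pos hdvd]
    obtain ⟨c, rfl⟩ := hdvd
    have heq : ∀ t : F2[X], polyToK t * (polyToK r)⁻¹ * polyToK (r * c) = polyToK (t * c) := by
      intro t
      rw [polyToK_mul, polyToK_mul]
      field_simp
    rw [Finset.sum_congr rfl (fun t _ => by rw [heq t, eKr_poly])]
    rw [Finset.sum_const, GN_card]
    push_cast
    ring
  · rw [if_neg hdvd]
    set b : F2[X] := f % r with hb
    set c : F2[X] := f / r with hc
    have hbne : b ≠ 0 := fun h => hdvd (EuclideanDomain.mod_eq_zero.mp h)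
    have hfe : f = r * c + b :=
      (EuclideanDomain.quotient_mul_add_remainder_eq f r).symm
    have hdeg : b.natDegree < r.natDegree := by
      apply Polynomial.natDegree_lt_natDegree hbne
      exact EuclideanDomain.mod_lt f hr0
    have heq : ∀ t : F2[X], polyToK t * (polyToK r)⁻¹ * polyToK f
        = polyToK (t * c) + (polyToK b * (polyToK r)⁻¹) * polyToK t := by
      intro t
      rw [hfe, polyToK_add, polyToK_mul, polyToK_mul]
      field_simp
    rw [Finset.sum_congr rfl (fun t _ => by rw [heq t, eKr_add, eKr_poly, one_mul])]
    obtain ⟨hne, hord⟩ := ratK_order hbne hr0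
    apply sum_eKr_eq_zero' hne <;> omega

-- ===== properness =====

lemma ratToK_zero : ratToK 0 = 0 := by
  rw [ratToK_eq, map_zero]

lemma ratToK_ne_zero {l : RatFunc F2} (hl : l ≠ 0) : ratToK l ≠ 0 :=
  (ratK_order (RatFunc.num_ne_zero hl) l.denom_ne_zero).1

lemma ratToK_order {l : RatFunc F2} (hl : l ≠ 0) :
    (ratToK l).order = (l.denom.natDegree : ℤ) - l.num.natDegree :=
  (ratK_order (RatFunc.num_ne_zero hl) l.denom_ne_zero).2

lemma proper_iff_order {l : RatFunc F2} (hl : l ≠ 0) :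
    l.num.degree < l.denom.degree ↔ 1 ≤ (ratToK l).order := by
  rw [ratToK_order hl]
  have h1 : l.num ≠ 0 := RatFunc.num_ne_zero hl
  constructor
  · intro h
    have := Polynomial.natDegree_lt_natDegree h1 h
    omega
  · intro h
    apply Polynomial.degree_lt_degree
    omega

lemma eKr_ratToK_add (l₁ l₂ : RatFunc F2) (f : F2[X]) :
    eKr (ratToK (l₁ + l₂) * polyToK f)
      = eKr (ratToK l₁ * polyToK f) * eKr (ratToK l₂ * polyToK f) := by
  rw [ratToK_eq l₁, ratToK_eq l₂, ratToK_eq (l₁ + l₂), map_add, add_mul, eKr_add]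

lemma proper_add {l₁ l₂ : RatFunc F2} (h1 : l₁.num.degree < l₁.denom.degree)
    (h2 : l₂.num.degree < l₂.denom.degree) :
    (l₁ + l₂).num.degree < (l₁ + l₂).denom.degree := by
  by_cases hz : l₁ + l₂ = 0
  · rw [hz]; simpa using WithBot.bot_lt_coe _
  by_cases h1z : l₁ = 0
  · rwa [h1z, zero_add]
  by_cases h2z : l₂ = 0
  · rwa [h2z, add_zero]
  rw [proper_iff_order hz]
  have e : ratToK (l₁ + l₂) = ratToK l₁ + ratToK l₂ := by
    rw [ratToK_eq, ratToK_eq, ratToK_eq, map_add]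
  have hne : ratToK l₁ + ratToK l₂ ≠ 0 := e ▸ ratToK_ne_zero hz
  have := HahnSeries.min_order_le_order_add hne
  rw [e]
  have o1 := (proper_iff_order h1z).mp h1
  have o2 := (proper_iff_order h2z).mp h2
  omega

lemma proper_zero : (0 : RatFunc F2).num.degree < (0 : RatFunc F2).denom.degree := by
  simpa using WithBot.bot_lt_coe _

-- ===== uniqueness of Fourier coefficients =====

instance ratFuncF2CharP : CharP (RatFunc F2) 2 :=
  charP_of_injective_algebraMap (RatFunc.algebraMap_injective F2) 2

lemma fourier_unique {F : F2[X] → ℝ} {β β' : RatFunc F2 → ℝ}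
    (hβ : IsFourierCoeffs F β) (hβ' : IsFourierCoeffs F β') : β = β' := by
  obtain ⟨hfin, hprop, hsum⟩ := hβ
  obtain ⟨hfin', hprop', hsum'⟩ := hβ'
  funext l₀
  by_cases hsupp : β l₀ = 0 ∧ β' l₀ = 0
  · rw [hsupp.1, hsupp.2]
  have hl₀prop : l₀.num.degree < l₀.denom.degree := by
    rcases not_and_or.mp hsupp with h | h
    · exact hprop l₀ h
    · exact hprop' l₀ h
  classical
  set S : Finset (RatFunc F2) := hfin.toFinset ∪ hfin'.toFinset ∪ {l₀} with hS
  have hl₀S : l₀ ∈ S := by simp [hS]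
  have hsuppS : Function.support β ⊆ ↑S := by
    intro l hl
    simp only [hS, Finset.coe_union, Set.mem_union, Finset.coe_singleton,
      Set.Finite.coe_toFinset]
    exact Or.inl (Or.inl hl)
  have hsuppS' : Function.support β' ⊆ ↑S := by
    intro l hl
    simp only [hS, Finset.coe_union, Set.mem_union, Finset.coe_singleton,
      Set.Finite.coe_toFinset]
    exact Or.inl (Or.inr hl)
  have hSprop : ∀ l ∈ S, l.num.degree < l.denom.degree := by
    intro l hl
    simp only [hS, Finset.mem_union, Finset.mem_singleton, Set.Finite.mem_toFinset] at hl
    rcases hl with (h | h) | h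
    · by_cases hz : β l = 0
      · exfalso; exact (Function.mem_support.mp (by simpa [Set.Finite.mem_toFinset] using h)) hz
      · exact hprop l hz
    · by_cases hz : β' l = 0
      · exfalso; exact (Function.mem_support.mp (by simpa [Set.Finite.mem_toFinset] using h)) hz
      · exact hprop' l hz
    · rw [h]; exact hl₀prop
  set M : ℕ := (S.sup (fun l => (ratToK (l + l₀)).order.toNat)) + 1 with hM
  -- the key orthogonality computation
  have key : ∀ l ∈ S,
      ∑ f ∈ GN M, eKr (ratToK l * polyToK f) * eKr (ratToK l₀ * polyToK f)
        = if l = l₀ then ((2:ℝ) ^ M) else 0 := by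
    intro l hl
    rw [Finset.sum_congr rfl (fun f _ => (eKr_ratToK_add l l₀ f).symm)]
    by_cases he : l = l₀
    · rw [if_pos he, he]
      have : l₀ + l₀ = 0 := CharTwo.add_self_eq_zero _
      rw [Finset.sum_congr rfl (fun f _ => by rw [this, ratToK_zero, zero_mul, eKr_zero])]
      rw [Finset.sum_const, GN_card]
      push_cast; ring
    · rw [if_neg he]
      have hne : l + l₀ ≠ 0 := by
        intro h
        apply he
        have := eq_neg_of_add_eq_zero_left h
        rwa [CharTwo.neg_eq] at this
      have hθ : ratToK (l + l₀) ≠ 0 := ratToK_ne_zero hne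
      have hord : 1 ≤ (ratToK (l + l₀)).order := by
        rw [← proper_iff_order hne]
        exact proper_add (hSprop l hl) hl₀prop
      apply sum_eKr_eq_zero' hθ hord
      have : (ratToK (l + l₀)).order.toNat
          ≤ S.sup (fun l => (ratToK (l + l₀)).order.toNat) :=
        Finset.le_sup (f := fun l => (ratToK (l + l₀)).order.toNat) hl
      omega
  -- compute the weighted sum two ways
  have main : ∀ γ : RatFunc F2 → ℝ, Function.support γ ⊆ ↑S →
      (∀ f : F2[X], F f = ∑ᶠ l, γ l * eKr (ratToK l * polyToK f)) →
      ∑ f ∈ GN M, F f * eKr (ratToK l₀ * polyToK f) = γ l₀ * 2 ^ M := by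
    intro γ hγS hγsum
    have step1 : ∀ f, F f = ∑ l ∈ S, γ l * eKr (ratToK l * polyToK f) := by
      intro f
      rw [hγsum f]
      apply finsum_eq_sum_of_support_subset
      intro l hl
      apply hγS
      intro hz
      simp [hz] at hl
    calc ∑ f ∈ GN M, F f * eKr (ratToK l₀ * polyToK f)
        = ∑ f ∈ GN M, ∑ l ∈ S, γ l * (eKr (ratToK l * polyToK f) * eKr (ratToK l₀ * polyToK f)) := by
          apply Finset.sum_congr rfl
          intro f _
          rw [step1 f, Finset.sum_mul]
          apply Finset.sum_congr rfl
          intro l _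
          ring
      _ = ∑ l ∈ S, γ l * ∑ f ∈ GN M, eKr (ratToK l * polyToK f) * eKr (ratToK l₀ * polyToK f) := by
          rw [Finset.sum_comm]
          apply Finset.sum_congr rfl
          intro l _
          rw [Finset.mul_sum]
      _ = ∑ l ∈ S, γ l * (if l = l₀ then ((2:ℝ) ^ M) else 0) := by
          apply Finset.sum_congr rfl
          intro l hl
          rw [key l hl]
      _ = γ l₀ * 2 ^ M := by
          rw [Finset.sum_congr rfl (fun l _ => mul_ite (l = l₀) (γ l) ((2:ℝ)^M) 0)]
          simp only [mul_zero]
          rw [Finset.sum_ite_eq' S l₀ (fun l => γ l * 2 ^ M), if_pos hl₀S]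
  have h1 := main β hsuppS hsum
  have h2 := main β' hsuppS' hsum'
  have : β l₀ * 2 ^ M = β' l₀ * 2 ^ M := by rw [← h1, ← h2]
  have hpow : (0:ℝ) < 2 ^ M := by positivity
  exact mul_right_cancel₀ (ne_of_gt hpow) this

-- ===== single prime Fourier expansion =====

/-- `t/r` as a rational function. -/
def mkR (t r : F2[X]) : RatFunc F2 :=
  algebraMap F2[X] (RatFunc F2) t / algebraMap F2[X] (RatFunc F2) r

lemma mkR_zero (r : F2[X]) : mkR 0 r = 0 := by
  rw [mkR, map_zero, zero_div]

lemma ratToK_mkR (t r : F2[X]) : ratToK (mkR t r) = polyToK t * (polyToK r)⁻¹ :=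
  ratToK_div t r

lemma mkR_proper {t r : F2[X]} (hr : Irreducible r) (ht : t ∈ GN r.natDegree) :
    (mkR t r).num.degree < (mkR t r).denom.degree := by
  by_cases ht0 : t = 0
  · rw [ht0, mkR_zero]; exact proper_zero
  have hr0 : r ≠ 0 := hr.ne_zero
  have hne : mkR t r ≠ 0 :=
    div_ne_zero (RatFunc.algebraMap_ne_zero ht0) (RatFunc.algebraMap_ne_zero hr0)
  rw [proper_iff_order hne]
  have h1 : ratToK (mkR t r) = polyToK t * (polyToK r)⁻¹ := ratToK_mkR t r
  have h2 := (ratK_order ht0 hr0).2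
  have hdeg : t.natDegree < r.natDegree := by
    have := mem_GN.mp ht
    have h3 : t.degree = (t.natDegree : ℕ) := Polynomial.degree_eq_natDegree ht0
    rw [h3] at this
    exact_mod_cast this
  rw [h1, h2]
  omega

/-- The Fourier coefficient values for a single prime `r`. -/
def gammaV (r t : F2[X]) : ℝ :=
  ((2:ℝ) ^ r.natDegree / (((2:ℝ) ^ r.natDegree - 1) * ((2:ℝ) ^ r.natDegree + 3))) *
    ((if t = 0 then (2:ℝ) ^ r.natDegree else 0) + 3 - eKr (polyToK t * (polyToK r)⁻¹))

lemma q_ge_two {r : F2[X]} (hr : Irreducible r) : (2:ℝ) ≤ (2:ℝ) ^ r.natDegree := by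
  have := hr.natDegree_pos
  calc (2:ℝ) = 2 ^ 1 := (pow_one 2).symm
  _ ≤ 2 ^ r.natDegree := by
    apply pow_le_pow_right₀ (by norm_num)
    omega

lemma gammaV_nonneg {r : F2[X]} (hr : Irreducible r) (t : F2[X]) : 0 ≤ gammaV r t := by
  set q := (2:ℝ) ^ r.natDegree
  have hq : 2 ≤ q := q_ge_two hr
  apply mul_nonneg
  · apply div_nonneg (by positivity)
    nlinarith
  · rcases eKr_vals (polyToK t * (polyToK r)⁻¹) with h | h <;> rw [h] <;>
      (split_ifs <;> nlinarith)

lemma gammaV_zero_ge_one {r : F2[X]} (hr : Irreducible r) : 1 ≤ gammaV r 0 := by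
  rw [gammaV, if_pos rfl, polyToK_zero, zero_mul, eKr_zero]
  set q := (2:ℝ) ^ r.natDegree
  have hq : 2 ≤ q := q_ge_two hr
  rw [div_mul_eq_mul_div, le_div_iff₀ (by nlinarith)]
  nlinarith

lemma single_prime_expansion {r : F2[X]} (hr : Irreducible r) (f : F2[X]) :
    Lambda_r r (f + 1) * tauSq_r r f
      = ∑ t ∈ GN r.natDegree, gammaV r t * eKr (ratToK (mkR t r) * polyToK f) := by
  have hr0 : r ≠ 0 := hr.ne_zero
  have hrd : 1 ≤ r.natDegree := hr.natDegree_pos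
  set d := r.natDegree with hd
  set q := (2:ℝ) ^ d with hqdef
  have hq : 2 ≤ q := q_ge_two hr
  set D := (q - 1) * (q + 3) with hD
  have hD0 : D ≠ 0 := by rw [hD]; nlinarith
  -- rewrite the summand
  have hsummand : ∀ t ∈ GN d, gammaV r t * eKr (ratToK (mkR t r) * polyToK f)
      = (q/D) * (((if t = 0 then q else 0) * eKr (polyToK t * (polyToK r)⁻¹ * polyToK f))
          + 3 * eKr (polyToK t * (polyToK r)⁻¹ * polyToK f)
          - eKr (polyToK t * (polyToK r)⁻¹ * polyToK (f+1))) := by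
    intro t _
    rw [ratToK_mkR, gammaV]
    have he : eKr (polyToK t * (polyToK r)⁻¹ * polyToK (f + 1))
        = eKr (polyToK t * (polyToK r)⁻¹) * eKr (polyToK t * (polyToK r)⁻¹ * polyToK f) := by
      rw [polyToK_add, polyToK_one, mul_add, mul_one, eKr_add, mul_comm]
    rw [he]
    ring
  rw [Finset.sum_congr rfl hsummand]
  have e1 : ∑ t ∈ GN d, (q/D) * (((if t = 0 then q else 0) * eKr (polyToK t * (polyToK r)⁻¹ * polyToK f))
          + 3 * eKr (polyToK t * (polyToK r)⁻¹ * polyToK f)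
          - eKr (polyToK t * (polyToK r)⁻¹ * polyToK (f+1)))
      = (q/D) * ((∑ t ∈ GN d, (if t = 0 then q else 0) * eKr (polyToK t * (polyToK r)⁻¹ * polyToK f))
          + 3 * (∑ t ∈ GN d, eKr (polyToK t * (polyToK r)⁻¹ * polyToK f))
          - (∑ t ∈ GN d, eKr (polyToK t * (polyToK r)⁻¹ * polyToK (f+1)))) := by
    rw [← Finset.mul_sum]
    congr 1
    rw [Finset.sum_sub_distrib, Finset.sum_add_distrib, ← Finset.mul_sum]
  rw [e1]
  -- the three sums
  have s1 : ∑ t ∈ GN d, (if t = 0 then q else 0) * eKr (polyToK t * (polyToK r)⁻¹ * polyToK f)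
      = q := by
    have : ∀ t ∈ GN d, (if t = 0 then q else 0) * eKr (polyToK t * (polyToK r)⁻¹ * polyToK f)
        = if t = 0 then q * eKr (polyToK t * (polyToK r)⁻¹ * polyToK f) else 0 := by
      intro t _
      split_ifs <;> ring
    rw [Finset.sum_congr rfl this, Finset.sum_ite_eq' (GN d) 0
      (fun t => q * eKr (polyToK t * (polyToK r)⁻¹ * polyToK f)), if_pos GN_zero_mem,
      polyToK_zero, zero_mul, zero_mul, eKr_zero, mul_one]
  have s2 : ∑ t ∈ GN d, eKr (polyToK t * (polyToK r)⁻¹ * polyToK f)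
      = if r ∣ f then q else 0 := by
    rw [hqdef, hd]; exact orth_sum hr0 hrd f
  have s3 : ∑ t ∈ GN d, eKr (polyToK t * (polyToK r)⁻¹ * polyToK (f+1))
      = if r ∣ (f+1) then q else 0 := by
    rw [hqdef, hd]; exact orth_sum hr0 hrd (f+1)
  rw [s1, s2, s3]
  -- case analysis
  have hnotboth : ¬ (r ∣ f ∧ r ∣ (f + 1)) := by
    rintro ⟨h1, h2⟩
    have : r ∣ 1 := by
      have := dvd_add h1 h2
      rwa [← add_assoc, CharTwo.add_self_eq_zero, zero_add] at this
    exact hr.not_isUnit (isUnit_of_dvd_one this)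
  have hq1 : q - 1 ≠ 0 := by nlinarith
  have hq3 : q + 3 ≠ 0 := by nlinarith
  by_cases h1 : r ∣ f
  · have h2 : ¬ r ∣ (f + 1) := fun h => hnotboth ⟨h1, h⟩
    rw [if_pos h1, if_neg h2, Lambda_r, tauSq_r, if_neg h2, if_pos h1, ← hd, ← hqdef, hD]
    field_simp
    ring
  · by_cases h2 : r ∣ (f + 1)
    · rw [if_neg h1, if_pos h2, Lambda_r, tauSq_r, if_pos h2, if_neg h1, ← hd, ← hqdef, hD]
      ring
    · rw [if_neg h1, if_neg h2, Lambda_r, tauSq_r, if_neg h2, if_neg h1, ← hd, ← hqdef, hD]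
      field_simp
      ring

-- ===== existence of the non-negative Fourier expansion =====

lemma exists_fourier (P : Finset F2[X]) (hP : ∀ r ∈ P, Irreducible r) :
    ∃ (S : Finset (RatFunc F2)) (β : RatFunc F2 → ℝ),
      (0 : RatFunc F2) ∈ S ∧
      (∀ l, l ∉ S → β l = 0) ∧
      (∀ l, β l ≠ 0 → l.num.degree < l.denom.degree) ∧
      (∀ l, 0 ≤ β l) ∧ 1 ≤ β 0 ∧
      ∀ f, (∏ r ∈ P, Lambda_r r (f + 1) * tauSq_r r f)
        = ∑ l ∈ S, β l * eKr (ratToK l * polyToK f) := by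
  classical
  induction P using Finset.induction_on with
  | empty =>
    refine ⟨{0}, fun l => if l = 0 then 1 else 0, Finset.mem_singleton_self 0, ?_, ?_, ?_, ?_, ?_⟩
    · intro l hl
      dsimp only
      rw [if_neg (by simpa using hl)]
    · intro l hl
      dsimp only at hl
      by_cases h : l = 0
      · rw [h]; exact proper_zero
      · rw [if_neg h] at hl; exact absurd rfl hl
    · intro l; dsimp only; split_ifs <;> norm_num
    · dsimp only; rw [if_pos rfl]
    · intro f
      dsimp only
      rw [Finset.prod_empty, Finset.sum_singleton, if_pos rfl, ratToK_zero, zero_mul,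
        eKr_zero, mul_one]
  | @insert r P hrP ih =>
    obtain ⟨S, β, h0S, hvan, hprop, hnonneg, hβ0, hsum⟩ :=
      ih (fun s hs => hP s (by simp [hs]))
    have hr : Irreducible r := hP r (by simp)
    set d := r.natDegree with hd
    set T : Finset (RatFunc F2) :=
      (S ×ˢ GN d).image (fun p => p.1 + mkR p.2 r) with hT
    set β' : RatFunc F2 → ℝ := fun l =>
      ∑ p ∈ S ×ˢ GN d, if l = p.1 + mkR p.2 r then β p.1 * gammaV r p.2 else 0 with hβ'
    have hterm_nonneg : ∀ (l : RatFunc F2), ∀ p ∈ S ×ˢ GN d,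
        0 ≤ (if l = p.1 + mkR p.2 r then β p.1 * gammaV r p.2 else 0 : ℝ) := by
      intro l p _
      split_ifs
      · exact mul_nonneg (hnonneg _) (gammaV_nonneg hr _)
      · exact le_refl 0
    have h00mem : ((0 : RatFunc F2), (0 : F2[X])) ∈ S ×ˢ GN d :=
      Finset.mem_product.mpr ⟨h0S, GN_zero_mem⟩
    have h0v : (0 : RatFunc F2) = (0 : RatFunc F2) + mkR 0 r := by
      rw [mkR_zero, add_zero]
    refine ⟨T, β', ?_, ?_, ?_, ?_, ?_, ?_⟩
    · -- 0 ∈ T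
      apply Finset.mem_image.mpr
      exact ⟨(0, 0), h00mem, h0v.symm⟩
    · -- vanishing off T
      intro l hl
      apply Finset.sum_eq_zero
      intro p hp
      rw [if_neg]
      intro he
      exact hl (Finset.mem_image.mpr ⟨p, hp, he.symm⟩)
    · -- properness
      intro l hl
      obtain ⟨p, hp, hne⟩ := Finset.exists_ne_zero_of_sum_ne_zero hl
      have hcond : l = p.1 + mkR p.2 r := by
        by_contra h
        rw [if_neg h] at hne
        exact hne rfl
      rw [if_pos hcond] at hne
      have hβne : β p.1 ≠ 0 := left_ne_zero_of_mul hne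
      rw [hcond]
      exact proper_add (hprop p.1 hβne) (mkR_proper hr (Finset.mem_product.mp hp).2)
    · -- nonneg
      intro l
      exact Finset.sum_nonneg (hterm_nonneg l)
    · -- β' 0 ≥ 1
      have hle : (if (0:RatFunc F2) = (0:RatFunc F2) + mkR 0 r
            then β 0 * gammaV r 0 else 0) ≤ β' 0 :=
        Finset.single_le_sum (hterm_nonneg 0) h00mem
      rw [if_pos h0v] at hle
      have hγ := gammaV_zero_ge_one hr
      nlinarith
    · -- the expansion
      intro f
      rw [Finset.prod_insert hrP, single_prime_expansion hr f, hsum f]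
      have step1 : (∑ t ∈ GN d, gammaV r t * eKr (ratToK (mkR t r) * polyToK f)) *
            (∑ l ∈ S, β l * eKr (ratToK l * polyToK f))
          = ∑ p ∈ S ×ˢ GN d,
              (β p.1 * gammaV r p.2) * eKr (ratToK (p.1 + mkR p.2 r) * polyToK f) := by
        rw [mul_comm, Finset.sum_mul_sum]
        rw [Finset.sum_product]
        apply Finset.sum_congr rfl
        intro l _
        apply Finset.sum_congr rfl
        intro t _
        rw [eKr_ratToK_add]
        ring
      rw [step1]
      symm
      calc ∑ l ∈ T, β' l * eKr (ratToK l * polyToK f)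
          = ∑ l ∈ T, ∑ p ∈ S ×ˢ GN d,
              (if l = p.1 + mkR p.2 r
                then (β p.1 * gammaV r p.2) * eKr (ratToK l * polyToK f) else 0) := by
            apply Finset.sum_congr rfl
            intro l _
            rw [hβ', Finset.sum_mul]
            apply Finset.sum_congr rfl
            intro p _
            rw [ite_mul, zero_mul]
        _ = ∑ p ∈ S ×ˢ GN d, ∑ l ∈ T,
              (if l = p.1 + mkR p.2 r
                then (β p.1 * gammaV r p.2) * eKr (ratToK l * polyToK f) else 0) :=
            Finset.sum_comm
        _ = ∑ p ∈ S ×ˢ GN d,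
              (β p.1 * gammaV r p.2) * eKr (ratToK (p.1 + mkR p.2 r) * polyToK f) := by
            apply Finset.sum_congr rfl
            intro p hp
            rw [Finset.sum_ite_eq' T (p.1 + mkR p.2 r)
              (fun l => (β p.1 * gammaV r p.2) * eKr (ratToK l * polyToK f)),
              if_pos (Finset.mem_image.mpr ⟨p, hp, rfl⟩)]

lemma isFourier_of_exists (M : ℕ) :
    ∃ β₀ : RatFunc F2 → ℝ,
      IsFourierCoeffs (fun f => LambdaTilde M (f + 1) * HTilde M f) β₀ ∧
      (∀ l, 0 ≤ β₀ l) ∧ 1 ≤ β₀ 0 := by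
  classical
  set P : Finset F2[X] := (GN M).filter (fun r => Irreducible r) with hP
  obtain ⟨S, β₀, h0S, hvan, hprop, hnonneg, hβ0, hsum⟩ :=
    exists_fourier P (fun r hr => (Finset.mem_filter.mp hr).2)
  refine ⟨β₀, ⟨?_, hprop, ?_⟩, hnonneg, hβ0⟩
  · apply Set.Finite.subset S.finite_toSet
    intro l hl
    by_contra h
    exact (Function.mem_support.mp hl) (hvan l (fun hc => h hc))
  · intro f
    have h1 : LambdaTilde M (f + 1) * HTilde M f
        = ∏ r ∈ P, (Lambda_r r (f + 1) * tauSq_r r f) := by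
      rw [LambdaTilde, HTilde, ← Finset.prod_mul_distrib]
    show LambdaTilde M (f + 1) * HTilde M f = _
    rw [h1, hsum f]
    symm
    apply finsum_eq_sum_of_support_subset
    intro l hl
    apply Finset.mem_coe.mpr
    by_contra h
    have := hvan l h
    simp [this] at hl

/-- With `R = N/4`: the Fourier coefficients `β(λ)` of `f ↦ ˜Λ_R(f+1)˜H_R(f)` are
(real and) non-negative, and `β(0) ≫ 1` uniformly in `N`. -/
theorem statement_16 :
    ∃ c : ℝ, 0 < c ∧ ∀ N : ℕ, ∀ β : RatFunc F2 → ℝ,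
      IsFourierCoeffs (fun f => LambdaTilde (N / 4) (f + 1) * HTilde (N / 4) f) β →
      (∀ l : RatFunc F2, 0 ≤ β l) ∧ c ≤ β 0 := by
  refine ⟨1, one_pos, ?_⟩
  intro N β hβ
  obtain ⟨β₀, hFC, hnonneg, hβ0⟩ := isFourier_of_exists (N / 4)
  have heq : β = β₀ := fourier_unique hβ hFC
  rw [heq]
  exact ⟨hnonneg, hβ0⟩
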